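/- The Gordon–Traldi four-variable subset expansion specializes to Whitney's corank-nullity expansion by setting x=1 and z=1, and to Tutte's basis activities expansion by setting w=0 and y=0. In particular, with w=0, y=0 the only subsets contributing nonzero terms are the bases of M. -/

import Mathlib

noncomputable section
attribute [local instance] Classical.propDecidable

namespace TutteActivities

variable {α : Type*} [DecidableEq α]

/-- `ℬ` is the family of bases of a matroid on ground set `E`:
nonempty, contained in `E`, and satisfying the basis-exchange axiom. -/
def IsMatroidOn (E : Finset α) (ℬ : Finset (Finset α)) : Prop :=
  ℬ.Nonempty ∧ (∀ B ∈ ℬ, B ⊆ E) ∧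
    ∀ B₁ ∈ ℬ, ∀ B₂ ∈ ℬ, ∀ e ∈ B₁ \ B₂, ∃ f ∈ B₂ \ B₁, insert f (B₁.erase e) ∈ ℬ

/-- A set is independent if it is contained in a basis. -/
def Indep (ℬ : Finset (Finset α)) (S : Finset α) : Prop := ∃ B ∈ ℬ, S ⊆ B

/-- A circuit is a minimal dependent subset of the ground set. -/
def Circuit (E : Finset α) (ℬ : Finset (Finset α)) (C : Finset α) : Prop :=
  C ⊆ E ∧ ¬ Indep ℬ C ∧ ∀ D ⊂ C, Indep ℬ D

/-- A cocircuit is a minimal subset of the ground set meeting every basis. -/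
def Cocircuit (E : Finset α) (ℬ : Finset (Finset α)) (C : Finset α) : Prop :=
  C ⊆ E ∧ (∀ B ∈ ℬ, (B ∩ C).Nonempty) ∧ ∀ D ⊂ C, ∃ B ∈ ℬ, B ∩ D = ∅

/-- The rank of a set `A`: the largest size of the intersection of a basis with `A`. -/
def rank (ℬ : Finset (Finset α)) (A : Finset α) : ℕ := ℬ.sup fun B => (B ∩ A).card

/-- `e` is the minimum element of `C` with respect to the order given by labels `σ`. -/
def IsMinOf (σ : α → ℕ) (e : α) (C : Finset α) : Prop := e ∈ C ∧ ∀ g ∈ C, σ e ≤ σ g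

/-- `f ∉ B` is externally active: `f` is the minimum of the fundamental circuit of `f`,
i.e. of a circuit contained in `B ∪ {f}`. -/
def ExtActive (E : Finset α) (ℬ : Finset (Finset α)) (σ : α → ℕ) (B : Finset α) (f : α) :
    Prop :=
  f ∉ B ∧ ∃ C, Circuit E ℬ C ∧ C ⊆ insert f B ∧ IsMinOf σ f C

/-- `e ∈ B` is internally active: `e` is the minimum of the fundamental cocircuit of `e`,
i.e. of a cocircuit contained in `(E \ B) ∪ {e}`. -/
def IntActive (E : Finset α) (ℬ : Finset (Finset α)) (σ : α → ℕ) (B : Finset α) (e : α) :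
    Prop :=
  e ∈ B ∧ ∃ C, Cocircuit E ℬ C ∧ C ⊆ insert e (E \ B) ∧ IsMinOf σ e C

/-- The set of externally active elements of a basis `B`. -/
def extSet (E : Finset α) (ℬ : Finset (Finset α)) (σ : α → ℕ) (B : Finset α) : Finset α :=
  E.filter (ExtActive E ℬ σ B)

/-- The set of internally active elements of a basis `B`. -/
def intSet (E : Finset α) (ℬ : Finset (Finset α)) (σ : α → ℕ) (B : Finset α) : Finset α :=
  E.filter (IntActive E ℬ σ B)

/-- The Tutte polynomial via Whitney's corank-nullity expansion. -/
def tutte (E : Finset α) (ℬ : Finset (Finset α)) (x y : ℤ) : ℤ :=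
  ∑ A ∈ E.powerset, (x - 1) ^ (rank ℬ E - rank ℬ A) * (y - 1) ^ (A.card - rank ℬ A)

/-- Gordon–Traldi internal activity for an arbitrary subset `S`:
elements `e` that are minimum in some cocircuit contained in `(E \ S) ∪ {e}`. -/
def subI (E : Finset α) (ℬ : Finset (Finset α)) (σ : α → ℕ) (S : Finset α) : Finset α :=
  E.filter fun e => ∃ C, Cocircuit E ℬ C ∧ C ⊆ insert e (E \ S) ∧ IsMinOf σ e C

/-- Gordon–Traldi external activity for an arbitrary subset `S`:
elements `e` that are minimum in some circuit contained in `S ∪ {e}`. -/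
def subL (E : Finset α) (ℬ : Finset (Finset α)) (σ : α → ℕ) (S : Finset α) : Finset α :=
  E.filter fun e => ∃ C, Circuit E ℬ C ∧ C ⊆ insert e S ∧ IsMinOf σ e C
open Finset
set_option linter.unusedSectionVars false
set_option linter.unnecessarySimpa false

lemma rank_def (ℬ : Finset (Finset α)) (A : Finset α) :
    rank ℬ A = ℬ.sup fun B => (B ∩ A).card := rfl

lemma card_inter_le_rank {B : Finset α} (hB : B ∈ ℬ) (A : Finset α) :
    (B ∩ A).card ≤ rank ℬ A := Finset.le_sup (f := fun B => (B ∩ A).card) hB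

section Aux

variable {E : Finset α} {ℬ : Finset (Finset α)}

lemma indep_mono {S T : Finset α} (h : S ⊆ T) (hT : Indep ℬ T) : Indep ℬ S := by
  obtain ⟨B, hB, hTB⟩ := hT; exact ⟨B, hB, h.trans hTB⟩

lemma bases_card_eq (hM : IsMatroidOn E ℬ) :
    ∀ B₁ ∈ ℬ, ∀ B₂ ∈ ℬ, B₁.card = B₂.card := by
  obtain ⟨hne, hsub, hex⟩ := hM
  suffices h : ∀ n, ∀ B₁ ∈ ℬ, ∀ B₂ ∈ ℬ, (B₁ \ B₂).card = n → B₁.card = B₂.card by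
    intro B₁ h₁ B₂ h₂; exact h _ B₁ h₁ B₂ h₂ rfl
  intro n
  induction n with
  | zero =>
    intro B₁ h₁ B₂ h₂ h0
    have hsub12 : B₁ ⊆ B₂ := by
      intro x hx; by_contra hx2
      have : x ∈ B₁ \ B₂ := mem_sdiff.2 ⟨hx, hx2⟩
      simpa [card_eq_zero.1 h0] using this
    have hsub21 : B₂ ⊆ B₁ := by
      intro x hx; by_contra hx2
      obtain ⟨f, hf, -⟩ := hex B₂ h₂ B₁ h₁ x (mem_sdiff.2 ⟨hx, hx2⟩)
      rw [card_eq_zero.1 h0] at hf; simpa using hf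
    rw [subset_antisymm hsub12 hsub21]
  | succ n ih =>
    intro B₁ h₁ B₂ h₂ hcard
    have hne' : (B₁ \ B₂).Nonempty := by rw [← card_pos, hcard]; omega
    obtain ⟨e, he⟩ := hne'
    obtain ⟨f, hf, hB'⟩ := hex B₁ h₁ B₂ h₂ e he
    have hfB₂ : f ∈ B₂ := (mem_sdiff.1 hf).1
    have hfB₁ : f ∉ B₁ := (mem_sdiff.1 hf).2
    have heB₁ : e ∈ B₁ := (mem_sdiff.1 he).1
    have heB₂ : e ∉ B₂ := (mem_sdiff.1 he).2
    have hc1 : (insert f (B₁.erase e)).card = B₁.card := by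
      rw [card_insert_of_notMem (fun h => hfB₁ (mem_erase.1 h).2),
        card_erase_of_mem heB₁]
      have : 0 < B₁.card := card_pos.2 ⟨e, heB₁⟩
      omega
    have hsd : insert f (B₁.erase e) \ B₂ = (B₁ \ B₂).erase e := by
      ext x
      simp only [mem_sdiff, mem_insert, mem_erase]
      constructor
      · rintro ⟨hx1 | hx1, hx2⟩
        · exact absurd (hx1 ▸ hfB₂) hx2
        · exact ⟨hx1.1, hx1.2, hx2⟩
      · rintro ⟨hx1, hx2, hx3⟩
        exact ⟨Or.inr ⟨hx1, hx2⟩, hx3⟩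
    have := ih (insert f (B₁.erase e)) hB' B₂ h₂ (by
      rw [hsd, card_erase_of_mem (mem_sdiff.2 ⟨heB₁, heB₂⟩), hcard]; omega)
    omega

lemma rank_le_card (ℬ : Finset (Finset α)) (A : Finset α) : rank ℬ A ≤ A.card :=
  Finset.sup_le fun _ _ => card_le_card inter_subset_right

lemma rank_mono {A A' : Finset α} (h : A ⊆ A') : rank ℬ A ≤ rank ℬ A' :=
  Finset.sup_le fun B hB =>
    le_trans (card_le_card (inter_subset_inter Subset.rfl h)) (card_inter_le_rank hB A')

lemma rank_insert_le (ℬ : Finset (Finset α)) (e : α) (A : Finset α) :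
    rank ℬ (insert e A) ≤ rank ℬ A + 1 := by
  refine Finset.sup_le fun B hB => ?_
  have h1 : B ∩ insert e A ⊆ insert e (B ∩ A) := by
    intro x hx
    rcases mem_insert.1 (mem_inter.1 hx).2 with h | h
    · exact mem_insert.2 (Or.inl h)
    · exact mem_insert.2 (Or.inr (mem_inter.2 ⟨(mem_inter.1 hx).1, h⟩))
  calc (B ∩ insert e A).card ≤ (insert e (B ∩ A)).card := card_le_card h1
    _ ≤ (B ∩ A).card + 1 := card_insert_le _ _
    _ ≤ rank ℬ A + 1 := Nat.add_le_add_right (card_inter_le_rank hB A) 1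

lemma rank_insert_cases (ℬ : Finset (Finset α)) (e : α) (A : Finset α) :
    rank ℬ (insert e A) = rank ℬ A ∨ rank ℬ (insert e A) = rank ℬ A + 1 := by
  have h1 := rank_mono (ℬ := ℬ) (subset_insert e A)
  have h2 := rank_insert_le ℬ e A
  omega

lemma card_le_rank {I A : Finset α} (hI : Indep ℬ I) (hIA : I ⊆ A) : I.card ≤ rank ℬ A := by
  obtain ⟨B, hB, hIB⟩ := hI
  have : I ⊆ B ∩ A := subset_inter hIB hIA
  exact le_trans (card_le_card this) (card_inter_le_rank hB A)

lemma indep_iff_rank (hM : IsMatroidOn E ℬ) {A : Finset α} :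
    Indep ℬ A ↔ rank ℬ A = A.card := by
  constructor
  · intro hA
    exact le_antisymm (rank_le_card ℬ A) (card_le_rank hA Subset.rfl)
  · intro h
    obtain ⟨B, hB, hBA⟩ := Finset.exists_mem_eq_sup ℬ hM.1 fun B => (B ∩ A).card
    have hBA' : rank ℬ A = (B ∩ A).card := hBA
    have hsub : B ∩ A ⊆ A := inter_subset_right
    have : B ∩ A = A := eq_of_subset_of_card_le hsub (by omega)
    exact ⟨B, hB, by rw [← this]; exact inter_subset_left⟩

lemma rank_indep (hM : IsMatroidOn E ℬ) {I : Finset α} (hI : Indep ℬ I) :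
    rank ℬ I = I.card := (indep_iff_rank hM).1 hI

lemma exists_indep_rank (hM : IsMatroidOn E ℬ) (A : Finset α) :
    ∃ I, Indep ℬ I ∧ I ⊆ A ∧ I.card = rank ℬ A := by
  obtain ⟨B, hB, hBA⟩ := Finset.exists_mem_eq_sup ℬ hM.1 fun B => (B ∩ A).card
  have hBA' : rank ℬ A = (B ∩ A).card := hBA
  exact ⟨B ∩ A, ⟨B, hB, inter_subset_left⟩, inter_subset_right, hBA'.symm⟩

lemma indep_aug (hM : IsMatroidOn E ℬ) {I J : Finset α} (hI : Indep ℬ I) (hJ : Indep ℬ J)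
    (hlt : I.card < J.card) : ∃ x ∈ J, x ∉ I ∧ Indep ℬ (insert x I) := by
  obtain ⟨B₂, hB₂, hJB₂⟩ := hJ
  -- choose a basis containing I minimizing |B \ (I ∪ B₂)|
  classical
  set F := ℬ.filter (fun B => I ⊆ B) with hF
  have hFne : F.Nonempty := by
    obtain ⟨B₁, hB₁, hIB₁⟩ := hI
    exact ⟨B₁, mem_filter.2 ⟨hB₁, hIB₁⟩⟩
  obtain ⟨B, hBF, hBmin⟩ := F.exists_min_image (fun B => (B \ (I ∪ B₂)).card) hFne
  have hB : B ∈ ℬ := (mem_filter.1 hBF).1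
  have hIB : I ⊆ B := (mem_filter.1 hBF).2
  have hBsub : B ⊆ I ∪ B₂ := by
    by_contra hcon
    obtain ⟨e, heB, henot⟩ := not_subset.1 hcon
    have heB₂ : e ∉ B₂ := fun h => henot (mem_union.2 (Or.inr h))
    have heI : e ∉ I := fun h => henot (mem_union.2 (Or.inl h))
    obtain ⟨f, hf, hB'⟩ := hM.2.2 B hB B₂ hB₂ e (mem_sdiff.2 ⟨heB, heB₂⟩)
    have hfB₂ : f ∈ B₂ := (mem_sdiff.1 hf).1
    have hfB : f ∉ B := (mem_sdiff.1 hf).2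
    have hIB' : I ⊆ insert f (B.erase e) := by
      intro x hx
      exact mem_insert.2 (Or.inr (mem_erase.2 ⟨fun h => heI (h ▸ hx), hIB hx⟩))
    have hmem : insert f (B.erase e) ∈ F := mem_filter.2 ⟨hB', hIB'⟩
    have key : insert f (B.erase e) \ (I ∪ B₂) ⊆ (B \ (I ∪ B₂)).erase e := by
      intro x hx
      obtain ⟨hx1, hx2⟩ := mem_sdiff.1 hx
      rcases mem_insert.1 hx1 with h | h
      · exact absurd (mem_union.2 (Or.inr (h ▸ hfB₂))) hx2
      · exact mem_erase.2 ⟨(mem_erase.1 h).1, mem_sdiff.2 ⟨(mem_erase.1 h).2, hx2⟩⟩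
    have hlt2 : (insert f (B.erase e) \ (I ∪ B₂)).card < (B \ (I ∪ B₂)).card :=
      lt_of_le_of_lt (card_le_card key)
        (card_erase_lt_of_mem (mem_sdiff.2 ⟨heB, henot⟩))
    exact absurd (hBmin _ hmem) (by omega)
  -- now find x ∈ J \ I with x ∈ B
  by_contra hcon
  push_neg at hcon
  have hJI : J \ I ⊆ B₂ \ B := by
    intro x hx
    obtain ⟨hxJ, hxI⟩ := mem_sdiff.1 hx
    refine mem_sdiff.2 ⟨hJB₂ hxJ, fun hxB => ?_⟩
    exact (hcon x hxJ hxI) ⟨B, hB, insert_subset hxB hIB⟩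
  have h1 : (J \ I).card ≤ (B₂ \ B).card := card_le_card hJI
  have h2 : (B \ B₂).card ≤ (I \ J).card := by
    refine card_le_card fun x hx => ?_
    obtain ⟨hxB, hxB₂⟩ := mem_sdiff.1 hx
    rcases mem_union.1 (hBsub hxB) with h | h
    · exact mem_sdiff.2 ⟨h, fun hxJ => hxB₂ (hJB₂ hxJ)⟩
    · exact absurd h hxB₂
  have hcards : B.card = B₂.card := bases_card_eq hM B hB B₂ hB₂
  have e1 : (B ∩ B₂).card + (B \ B₂).card = B.card := card_inter_add_card_sdiff B B₂
  have e2 : (B₂ ∩ B).card + (B₂ \ B).card = B₂.card := card_inter_add_card_sdiff B₂ B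
  have e3 : (J ∩ I).card + (J \ I).card = J.card := card_inter_add_card_sdiff J I
  have e4 : (I ∩ J).card + (I \ J).card = I.card := card_inter_add_card_sdiff I J
  have e5 : (B ∩ B₂).card = (B₂ ∩ B).card := by rw [inter_comm]
  have e6 : (J ∩ I).card = (I ∩ J).card := by rw [inter_comm]
  omega

end Aux
section Aux2

variable {E : Finset α} {ℬ : Finset (Finset α)}

lemma rank_ground (hM : IsMatroidOn E ℬ) {B : Finset α} (hB : B ∈ ℬ) :
    rank ℬ E = B.card := by
  apply le_antisymm
  · refine Finset.sup_le fun B' hB' => ?_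
    calc (B' ∩ E).card ≤ B'.card := card_le_card inter_subset_left
      _ = B.card := bases_card_eq hM B' hB' B hB
  · have := card_inter_le_rank hB E
    rwa [inter_eq_left.2 (hM.2.1 B hB)] at this

lemma mem_bases_of_card (hM : IsMatroidOn E ℬ) {I : Finset α} (hI : Indep ℬ I)
    (hcard : I.card = rank ℬ E) : I ∈ ℬ := by
  obtain ⟨B, hB, hIB⟩ := hI
  have : I = B := eq_of_subset_of_card_le hIB (by rw [hcard, rank_ground hM hB])
  rwa [this]

/-- extend an independent subset of `A` to one of full rank in `A` -/
lemma exists_indep_ext (hM : IsMatroidOn E ℬ) {I A : Finset α} (hI : Indep ℬ I)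
    (hIA : I ⊆ A) : ∃ I', Indep ℬ I' ∧ I ⊆ I' ∧ I' ⊆ A ∧ I'.card = rank ℬ A := by
  obtain ⟨J, hJ, hJA, hJc⟩ := exists_indep_rank hM A
  -- induction on rank ℬ A - I.card
  have H : ∀ n, ∀ I : Finset α, Indep ℬ I → I ⊆ A → rank ℬ A - I.card = n →
      ∃ I', Indep ℬ I' ∧ I ⊆ I' ∧ I' ⊆ A ∧ I'.card = rank ℬ A := by
    intro n
    induction n with
    | zero =>
      intro I hI hIA h0
      have h1 := card_le_rank hI hIA
      exact ⟨I, hI, Subset.rfl, hIA, by omega⟩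
    | succ n ih =>
      intro I hI hIA h0
      have hlt : I.card < J.card := by rw [hJc]; omega
      obtain ⟨x, hxJ, hxI, hxind⟩ := indep_aug hM hI hJ hlt
      have hsub : insert x I ⊆ A := insert_subset (hJA hxJ) hIA
      have hcard : (insert x I).card = I.card + 1 := card_insert_of_notMem hxI
      obtain ⟨I', h1, h2, h3, h4⟩ := ih (insert x I) hxind hsub (by omega)
      exact ⟨I', h1, (subset_insert x I).trans h2, h3, h4⟩
  exact H _ I hI hIA rfl

/-- closure is monotone (the key exchange lemma F4) -/
lemma rank_insert_eq_of_subset (hM : IsMatroidOn E ℬ) {A B : Finset α} {e : α}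
    (hAB : A ⊆ B) (h : rank ℬ (insert e A) = rank ℬ A) :
    rank ℬ (insert e B) = rank ℬ B := by
  by_cases heB : e ∈ B
  · rw [insert_eq_self.2 heB]
  have heA : e ∉ A := fun h' => heB (hAB h')
  rcases rank_insert_cases ℬ e B with hc | hc
  · exact hc
  exfalso
  obtain ⟨J, hJ, hJA, hJc⟩ := exists_indep_rank hM A
  obtain ⟨J', hJ', hJJ', hJ'B, hJ'c⟩ := exists_indep_ext hM hJ (hJA.trans hAB)
  obtain ⟨I, hI, hIB, hIc⟩ := exists_indep_rank hM (insert e B)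
  have hlt : J'.card < I.card := by omega
  obtain ⟨x, hxI, hxJ', hxind⟩ := indep_aug hM hJ' hI hlt
  have hxe : x = e := by
    by_contra hxe
    have hxB : x ∈ B := by
      rcases mem_insert.1 (hIB hxI) with h' | h'
      · exact absurd h' hxe
      · exact h'
    have : (insert x J').card ≤ rank ℬ B :=
      card_le_rank hxind (insert_subset hxB hJ'B)
    rw [card_insert_of_notMem hxJ'] at this
    omega
  subst hxe
  have heJ : x ∉ J := fun h' => heA (hJA h')
  have hind : Indep ℬ (insert x J) := indep_mono (insert_subset_insert x hJJ') hxind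
  have : (insert x J).card ≤ rank ℬ (insert x A) :=
    card_le_rank hind (insert_subset_insert x hJA)
  rw [card_insert_of_notMem heJ] at this
  omega

lemma exists_circuit_of_dep (hM : IsMatroidOn E ℬ) :
    ∀ A : Finset α, A ⊆ E → ¬ Indep ℬ A → ∃ C, C ⊆ A ∧ Circuit E ℬ C := by
  intro A
  induction A using Finset.strongInductionOn with
  | _ A ih =>
    intro hAE hdep
    by_cases h : ∀ D ⊂ A, Indep ℬ D
    · exact ⟨A, Subset.rfl, hAE, hdep, h⟩
    · push_neg at h
      obtain ⟨D, hD, hDdep⟩ := h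
      obtain ⟨C, hCD, hC⟩ := ih D hD (hD.subset.trans hAE) hDdep
      exact ⟨C, hCD.trans hD.subset, hC⟩

/-- fundamental circuit existence -/
lemma exists_circuit_insert (hM : IsMatroidOn E ℬ) {A : Finset α} {e : α}
    (hsub : insert e A ⊆ E) (h : rank ℬ (insert e A) = rank ℬ A) (heA : e ∉ A) :
    ∃ C, Circuit E ℬ C ∧ C ⊆ insert e A ∧ e ∈ C := by
  obtain ⟨I, hI, hIA, hIc⟩ := exists_indep_rank hM A
  have hdep : ¬ Indep ℬ (insert e I) := by
    intro hind
    have h1 : (insert e I).card ≤ rank ℬ (insert e A) :=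
      card_le_rank hind (insert_subset_insert _ hIA)
    have h2 : e ∉ I := fun h' => heA (hIA h')
    rw [card_insert_of_notMem h2] at h1
    omega
  obtain ⟨C, hCsub, hC⟩ := exists_circuit_of_dep hM (insert e I)
    ((insert_subset_insert _ hIA).trans hsub) hdep
  refine ⟨C, hC, hCsub.trans (insert_subset_insert _ hIA), ?_⟩
  by_contra heC
  have : C ⊆ I := fun x hx => by
    rcases mem_insert.1 (hCsub hx) with h' | h'
    · exact absurd (h' ▸ hx) heC
    · exact h'
  exact hC.2.1 (indep_mono this hI)

/-- rank can be increased by an element of `E` whenever not full -/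
lemma exists_rank_increase (hM : IsMatroidOn E ℬ) {X : Finset α} (hXE : X ⊆ E)
    (h : rank ℬ X < rank ℬ E) :
    ∃ c ∈ E, rank ℬ (insert c X) = rank ℬ X + 1 := by
  obtain ⟨I, hI, hIX, hIc⟩ := exists_indep_rank hM X
  obtain ⟨B, hB⟩ := hM.1
  have hBE := rank_ground hM hB
  have hlt : I.card < B.card := by omega
  obtain ⟨c, hcB, hcI, hcind⟩ := indep_aug hM hI ⟨B, hB, Subset.rfl⟩ hlt
  refine ⟨c, hM.2.1 B hB hcB, ?_⟩
  have h1 : (insert c I).card ≤ rank ℬ (insert c X) :=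
    card_le_rank hcind (insert_subset_insert _ hIX)
  rw [card_insert_of_notMem hcI] at h1
  have h2 := rank_insert_le ℬ c X
  omega

end Aux2
section Aux3

variable {E : Finset α} {ℬ : Finset (Finset α)}

/-- cocircuit existence from a rank jump -/
lemma exists_cocircuit_insert (hM : IsMatroidOn E ℬ) {A : Finset α} {e : α}
    (hA : A ⊆ E) (he : e ∈ E) (h : rank ℬ (insert e A) = rank ℬ A + 1) :
    ∃ C, Cocircuit E ℬ C ∧ e ∈ C ∧ C ⊆ E \ A := by
  classical
  set F := E.powerset.filter (fun H => A ⊆ H ∧ rank ℬ (insert e H) = rank ℬ H + 1) with hF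
  have hFne : F.Nonempty := ⟨A, mem_filter.2 ⟨mem_powerset.2 hA, Subset.rfl, h⟩⟩
  obtain ⟨H, hHF, hHmax⟩ := F.exists_max_image (fun H => H.card) hFne
  obtain ⟨hHpow, hAH, hHrank⟩ := mem_filter.1 hHF
  have hHE : H ⊆ E := mem_powerset.1 hHpow
  have heH : e ∉ H := by
    intro h'
    rw [insert_eq_self.2 h'] at hHrank
    omega
  -- step: rank (insert e H) = rank E
  have hfull : rank ℬ (insert e H) = rank ℬ E := by
    by_contra hcon
    have hle : rank ℬ (insert e H) ≤ rank ℬ E := rank_mono (insert_subset he hHE)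
    have hlt : rank ℬ (insert e H) < rank ℬ E := lt_of_le_of_ne hle hcon
    obtain ⟨c, hcE, hcrank⟩ := exists_rank_increase hM (insert_subset he hHE) hlt
    have hcH : c ∉ H := by
      intro h'
      rw [insert_eq_self.2 (mem_insert_of_mem h')] at hcrank
      omega
    have hce : c ≠ e := by
      intro h'
      rw [h', insert_eq_self.2 (mem_insert_self e H)] at hcrank
      omega
    have h1 : rank ℬ (insert e (insert c H)) = rank ℬ H + 2 := by
      rw [Finset.insert_comm]; omega
    have h2 : rank ℬ (insert c H) = rank ℬ H + 1 := by
      have ha := rank_insert_le ℬ e (insert c H)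
      have hb := rank_insert_le ℬ c H
      have hc := rank_mono (ℬ := ℬ) (subset_insert c H)
      omega
    have hmem : insert c H ∈ F := mem_filter.2 ⟨mem_powerset.2 (insert_subset hcE hHE),
      hAH.trans (subset_insert c H), by omega⟩
    have := hHmax _ hmem
    rw [card_insert_of_notMem hcH] at this
    omega
  -- every c outside H has rank (insert c H) = rank E
  have hstep : ∀ c ∈ E, c ∉ H → rank ℬ (insert c H) = rank ℬ E := by
    intro c hcE hcH
    by_cases hce : c = e
    · rw [hce, hfull]
    rcases rank_insert_cases ℬ c H with h1 | h1
    · -- then insert c H would be in F, contradicting maximality? no: it IS eligible only if jump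
      -- rank (insert e (insert c H)) ≥ rank (insert e H) = rank E
      have h2 : rank ℬ (insert e (insert c H)) = rank ℬ E := by
        have ha : rank ℬ (insert e H) ≤ rank ℬ (insert e (insert c H)) :=
          rank_mono (insert_subset_insert _ (subset_insert c H))
        have hb : rank ℬ (insert e (insert c H)) ≤ rank ℬ E :=
          rank_mono (insert_subset he (insert_subset hcE hHE))
        omega
      exfalso
      have hmem : insert c H ∈ F := mem_filter.2 ⟨mem_powerset.2 (insert_subset hcE hHE),
        hAH.trans (subset_insert c H), by omega⟩
      have := hHmax _ hmem
      rw [card_insert_of_notMem hcH] at this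
      omega
    · omega
  refine ⟨E \ H, ⟨sdiff_subset, ?_, ?_⟩, mem_sdiff.2 ⟨he, heH⟩, sdiff_subset_sdiff Subset.rfl hAH⟩
  · -- every basis meets E \ H
    intro B hB
    by_contra hcon
    rw [not_nonempty_iff_eq_empty] at hcon
    have hBH : B ⊆ H := fun x hx => by
      by_contra hxH
      have : x ∈ B ∩ (E \ H) := mem_inter.2 ⟨hx, mem_sdiff.2 ⟨hM.2.1 B hB hx, hxH⟩⟩
      simp [hcon] at this
    have h1 : B.card ≤ rank ℬ H := card_le_rank ⟨B, hB, Subset.rfl⟩ hBH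
    have h2 := rank_ground hM hB
    have h3 := rank_insert_le ℬ e H
    have h4 : rank ℬ H < rank ℬ (insert e H) := by omega
    omega
  · -- minimality
    intro D hD
    obtain ⟨c, hcC, hcD⟩ := exists_of_ssubset hD
    have hcE : c ∈ E := (mem_sdiff.1 hcC).1
    have hcH : c ∉ H := (mem_sdiff.1 hcC).2
    have hr := hstep c hcE hcH
    obtain ⟨I, hI, hIsub, hIc⟩ := exists_indep_rank hM (insert c H)
    have hIB : I ∈ ℬ := mem_bases_of_card hM hI (by omega)
    refine ⟨I, hIB, eq_empty_iff_forall_notMem.2 fun x hx => ?_⟩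
    obtain ⟨hxI, hxD⟩ := mem_inter.1 hx
    have hxC : x ∈ E \ H := hD.subset hxD
    rcases mem_insert.1 (hIsub hxI) with h' | h'
    · exact hcD (h' ▸ hxD)
    · exact (mem_sdiff.1 hxC).2 h'

/-- rank jump from a cocircuit -/
lemma rank_jump_of_cocircuit (hM : IsMatroidOn E ℬ) {C : Finset α} {e : α}
    (hC : Cocircuit E ℬ C) (heC : e ∈ C) {A : Finset α} (hA : A ⊆ E \ C) :
    rank ℬ (insert e A) = rank ℬ A + 1 := by
  obtain ⟨hCE, hmeet, hmin⟩ := hC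
  have hjump : rank ℬ (insert e (E \ C)) = rank ℬ (E \ C) + 1 := by
    obtain ⟨B, hB, hBD⟩ := hmin (C.erase e) (erase_ssubset heC)
    have hBsub : B ⊆ insert e (E \ C) := by
      intro x hxB
      by_cases hxC : x ∈ C
      · have hxe : x = e := by
          by_contra h'
          have : x ∈ B ∩ C.erase e := mem_inter.2 ⟨hxB, mem_erase.2 ⟨h', hxC⟩⟩
          simp [hBD] at this
        exact mem_insert.2 (Or.inl hxe)
      · exact mem_insert.2 (Or.inr (mem_sdiff.2 ⟨hM.2.1 B hB hxB, hxC⟩))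
    have h1 : B.card ≤ rank ℬ (insert e (E \ C)) := card_le_rank ⟨B, hB, Subset.rfl⟩ hBsub
    have h2 := rank_ground hM hB
    have h3 : rank ℬ (insert e (E \ C)) ≤ rank ℬ E :=
      rank_mono (insert_subset (hCE heC) sdiff_subset)
    have h4 : rank ℬ (E \ C) < rank ℬ E := by
      obtain ⟨I, hI, hIsub, hIc⟩ := exists_indep_rank hM (E \ C)
      obtain ⟨B', hB', hIB'⟩ := hI
      have h5 := rank_ground hM hB'
      have h6 : I ⊂ B' := by
        refine ssubset_of_subset_of_ne hIB' ?_
        intro h'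
        obtain ⟨y, hy⟩ := hmeet B' hB'
        obtain ⟨hyB', hyC⟩ := mem_inter.1 hy
        have : y ∈ E \ C := hIsub (h' ▸ hyB')
        exact (mem_sdiff.1 this).2 hyC
      have h7 : I.card < B'.card := card_lt_card h6
      omega
    have h5 := rank_insert_le ℬ e (E \ C)
    omega
  rcases rank_insert_cases ℬ e A with h1 | h1
  · exfalso
    have := rank_insert_eq_of_subset hM hA h1
    omega
  · exact h1

end Aux3
section Aux4

variable {E : Finset α} {ℬ : Finset (Finset α)} {σ : α → ℕ}

lemma circuit_rank_insert (hM : IsMatroidOn E ℬ) {C : Finset α} {e : α}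
    (hC : Circuit E ℬ C) (heC : e ∈ C) :
    rank ℬ (insert e (C.erase e)) = rank ℬ (C.erase e) := by
  rw [insert_erase heC]
  have hindep : Indep ℬ (C.erase e) := hC.2.2 _ (erase_ssubset heC)
  have h1 : rank ℬ (C.erase e) = (C.erase e).card := rank_indep hM hindep
  have h2 : rank ℬ C ≤ C.card := rank_le_card ℬ C
  have h3 : rank ℬ C ≠ C.card := fun h => hC.2.1 ((indep_iff_rank hM).2 h)
  have h4 : rank ℬ (C.erase e) ≤ rank ℬ C := rank_mono (erase_subset e C)
  have h5 : (C.erase e).card = C.card - 1 := card_erase_of_mem heC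
  have h6 : 0 < C.card := card_pos.2 ⟨e, heC⟩
  omega

lemma mem_subL_inter (hM : IsMatroidOn E ℬ) (hσ : Function.Injective σ)
    {S : Finset α} (hS : S ⊆ E) (e : α) :
    e ∈ subL E ℬ σ S ∩ S ↔
      e ∈ S ∧ rank ℬ (insert e (S.filter fun g => σ e < σ g)) =
        rank ℬ (S.filter fun g => σ e < σ g) := by
  constructor
  · intro he
    obtain ⟨heL, heS⟩ := mem_inter.1 he
    obtain ⟨heE, C, hC, hCsub, hminOf⟩ := mem_filter.1 heL
    have heC : e ∈ C := hminOf.1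
    have hmin : ∀ g ∈ C, σ e ≤ σ g := hminOf.2
    refine ⟨heS, ?_⟩
    have hsub : C.erase e ⊆ S.filter fun g => σ e < σ g := by
      intro x hx
      obtain ⟨hxe, hxC⟩ := mem_erase.1 hx
      have hxS : x ∈ S := by
        rcases mem_insert.1 (hCsub hxC) with h | h
        · exact absurd h hxe
        · exact h
      exact mem_filter.2 ⟨hxS, lt_of_le_of_ne (hmin x hxC) fun h => hxe (hσ h).symm⟩
    exact rank_insert_eq_of_subset hM hsub (circuit_rank_insert hM hC heC)
  · rintro ⟨heS, hrank⟩
    have heE := hS heS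
    have hnot : e ∉ S.filter fun g => σ e < σ g := by simp
    obtain ⟨C, hC, hCsub, heC⟩ := exists_circuit_insert hM
      (insert_subset heE ((filter_subset _ _).trans hS)) hrank hnot
    refine mem_inter.2 ⟨mem_filter.2 ⟨heE, C, hC,
      hCsub.trans (insert_subset_insert _ (filter_subset _ _)), heC, fun g hg => ?_⟩, heS⟩
    rcases mem_insert.1 (hCsub hg) with h | h
    · exact le_of_eq (by rw [h])
    · exact le_of_lt (mem_filter.1 h).2

lemma mem_subI_sdiff (hM : IsMatroidOn E ℬ) (hσ : Function.Injective σ)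
    {S : Finset α} (hS : S ⊆ E) (e : α) :
    e ∈ subI E ℬ σ S \ S ↔
      e ∈ E \ S ∧ rank ℬ (insert e (S ∪ (E \ S).filter fun g => σ g < σ e)) =
        rank ℬ (S ∪ (E \ S).filter fun g => σ g < σ e) + 1 := by
  constructor
  · intro he
    obtain ⟨heI, heS⟩ := mem_sdiff.1 he
    obtain ⟨heE, C, hC, hCsub, hminOf⟩ := mem_filter.1 heI
    have heC : e ∈ C := hminOf.1
    have hmin : ∀ g ∈ C, σ e ≤ σ g := hminOf.2
    refine ⟨mem_sdiff.2 ⟨heE, heS⟩, ?_⟩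
    refine rank_jump_of_cocircuit hM hC heC ?_
    intro x hx
    rcases mem_union.1 hx with hxS | hxT
    · refine mem_sdiff.2 ⟨hS hxS, fun hxC => ?_⟩
      rcases mem_insert.1 (hCsub hxC) with h | h
      · exact heS (h ▸ hxS)
      · exact (mem_sdiff.1 h).2 hxS
    · obtain ⟨hxES, hxlt⟩ := mem_filter.1 hxT
      refine mem_sdiff.2 ⟨(mem_sdiff.1 hxES).1, fun hxC => ?_⟩
      exact absurd (hmin x hxC) (by omega)
  · rintro ⟨heES, hrank⟩
    obtain ⟨heE, heS⟩ := mem_sdiff.1 heES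
    have hAE : S ∪ (E \ S).filter (fun g => σ g < σ e) ⊆ E :=
      union_subset hS ((filter_subset _ _).trans sdiff_subset)
    obtain ⟨C, hC, heC, hCsub⟩ := exists_cocircuit_insert hM hAE heE hrank
    refine mem_sdiff.2 ⟨mem_filter.2 ⟨heE, C, hC, ?_, heC, fun g hg => ?_⟩, heS⟩
    · intro x hx
      have hx2 := mem_sdiff.1 (hCsub hx)
      refine mem_insert.2 (Or.inr (mem_sdiff.2 ⟨hx2.1, fun hxS => ?_⟩))
      exact hx2.2 (mem_union.2 (Or.inl hxS))
    · have hg2 := mem_sdiff.1 (hCsub hg)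
      have hgS : g ∉ S := fun h => hg2.2 (mem_union.2 (Or.inl h))
      have hgT : g ∉ (E \ S).filter fun g => σ g < σ e :=
        fun h => hg2.2 (mem_union.2 (Or.inr h))
      have : ¬ (σ g < σ e) := fun h => hgT (mem_filter.2 ⟨mem_sdiff.2 ⟨hg2.1, hgS⟩, h⟩)
      omega

end Aux4
section Aux5

variable {E : Finset α} {ℬ : Finset (Finset α)} {σ : α → ℕ}

lemma rank_empty (ℬ : Finset (Finset α)) : rank ℬ (∅ : Finset α) = 0 :=
  Nat.le_antisymm (rank_le_card ℬ ∅) (Nat.zero_le _)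

lemma count_nullity (hσ : Function.Injective σ) (ℬ : Finset (Finset α)) :
    ∀ S : Finset α,
    (S.filter fun e => rank ℬ (insert e (S.filter fun g => σ e < σ g)) =
        rank ℬ (S.filter fun g => σ e < σ g)).card = S.card - rank ℬ S := by
  intro S
  induction S using Finset.strongInductionOn with
  | _ S ih =>
    rcases S.eq_empty_or_nonempty with rfl | hne
    · simp [rank_empty]
    obtain ⟨e0, he0, hmin⟩ := S.exists_min_image σ hne
    have hS' : S.erase e0 ⊂ S := erase_ssubset he0
    set S' := S.erase e0 with hS'def
    have hins : insert e0 S' = S := insert_erase he0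
    have he0S' : e0 ∉ S' := notMem_erase e0 S
    have hfilter0 : (S.filter fun g => σ e0 < σ g) = S' := by
      ext x
      simp only [mem_filter, hS'def, mem_erase]
      constructor
      · rintro ⟨hxS, hlt⟩
        exact ⟨fun h => by subst h; omega, hxS⟩
      · rintro ⟨hxe, hxS⟩
        exact ⟨hxS, lt_of_le_of_ne (hmin x hxS) fun h => hxe (hσ h).symm⟩
    have hfilters : ∀ e ∈ S', (S.filter fun g => σ e < σ g) =
        S'.filter fun g => σ e < σ g := by
      intro e he
      have heS : e ∈ S := (mem_erase.1 he).2
      have h1 : σ e0 < σ e := lt_of_le_of_ne (hmin e heS)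
        fun h => (mem_erase.1 he).1 (hσ h).symm
      ext x
      simp only [mem_filter, hS'def, mem_erase]
      constructor
      · rintro ⟨hxS, hlt⟩
        exact ⟨⟨fun h => by subst h; omega, hxS⟩, hlt⟩
      · rintro ⟨⟨hxe, hxS⟩, hlt⟩
        exact ⟨hxS, hlt⟩
    have hPP' : ∀ e ∈ S',
        ((rank ℬ (insert e (S.filter fun g => σ e < σ g)) =
            rank ℬ (S.filter fun g => σ e < σ g)) ↔
          (rank ℬ (insert e (S'.filter fun g => σ e < σ g)) =
            rank ℬ (S'.filter fun g => σ e < σ g))) := by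
      intro e he
      rw [hfilters e he]
    have hsplit : (S.filter fun e => rank ℬ (insert e (S.filter fun g => σ e < σ g)) =
          rank ℬ (S.filter fun g => σ e < σ g)) =
        if rank ℬ (insert e0 (S.filter fun g => σ e0 < σ g)) =
            rank ℬ (S.filter fun g => σ e0 < σ g) then
          insert e0 (S'.filter fun e => rank ℬ (insert e (S'.filter fun g => σ e < σ g)) =
            rank ℬ (S'.filter fun g => σ e < σ g))
        else (S'.filter fun e => rank ℬ (insert e (S'.filter fun g => σ e < σ g)) =
            rank ℬ (S'.filter fun g => σ e < σ g)) := by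
      have h00 : (S.filter fun e => rank ℬ (insert e (S.filter fun g => σ e < σ g)) =
            rank ℬ (S.filter fun g => σ e < σ g)) =
          ((insert e0 S').filter fun e => rank ℬ (insert e (S.filter fun g => σ e < σ g)) =
            rank ℬ (S.filter fun g => σ e < σ g)) := by rw [hins]
      rw [h00, filter_insert, filter_congr hPP']
    have hcards : S.card = S'.card + 1 := by rw [← hins, card_insert_of_notMem he0S']
    have hrank' : rank ℬ S' ≤ S'.card := rank_le_card ℬ S'
    have hrcases : rank ℬ S = rank ℬ S' ∨ rank ℬ S = rank ℬ S' + 1 := by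
      rw [← hins]
      exact rank_insert_cases ℬ e0 S'
    have hP0 : (rank ℬ (insert e0 (S.filter fun g => σ e0 < σ g)) =
        rank ℬ (S.filter fun g => σ e0 < σ g)) ↔ rank ℬ S = rank ℬ S' := by
      rw [hfilter0, hins]
    have hIH := ih S' hS'
    by_cases h0 : rank ℬ (insert e0 (S.filter fun g => σ e0 < σ g)) =
        rank ℬ (S.filter fun g => σ e0 < σ g)
    · rw [hsplit, if_pos h0,
        card_insert_of_notMem (fun h => he0S' (mem_filter.1 h).1), hIH]
      have := hP0.1 h0
      omega
    · rw [hsplit, if_neg h0, hIH]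
      have : rank ℬ S = rank ℬ S' + 1 := by
        rcases hrcases with h | h
        · exact absurd (hP0.2 h) h0
        · exact h
      omega

lemma count_corank (hσ : Function.Injective σ) (ℬ : Finset (Finset α)) (S : Finset α) :
    ∀ T : Finset α,
    (T.filter fun e => rank ℬ (insert e (S ∪ T.filter fun g => σ g < σ e)) =
        rank ℬ (S ∪ T.filter fun g => σ g < σ e) + 1).card
      = rank ℬ (S ∪ T) - rank ℬ S := by
  intro T
  induction T using Finset.strongInductionOn with
  | _ T ih =>
    rcases T.eq_empty_or_nonempty with rfl | hne
    · simp
    obtain ⟨e1, he1, hmax⟩ := T.exists_max_image σ hne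
    have hT'ss : T.erase e1 ⊂ T := erase_ssubset he1
    set T' := T.erase e1 with hT'def
    have hins : insert e1 T' = T := insert_erase he1
    have he1T' : e1 ∉ T' := notMem_erase e1 T
    have hfilter1 : (T.filter fun g => σ g < σ e1) = T' := by
      ext x
      simp only [mem_filter, hT'def, mem_erase]
      constructor
      · rintro ⟨hxT, hlt⟩
        exact ⟨fun h => by subst h; omega, hxT⟩
      · rintro ⟨hxe, hxT⟩
        exact ⟨hxT, lt_of_le_of_ne (hmax x hxT) fun h => hxe (hσ h)⟩
    have hfilters : ∀ e ∈ T', (T.filter fun g => σ g < σ e) =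
        T'.filter fun g => σ g < σ e := by
      intro e he
      have heT : e ∈ T := (mem_erase.1 he).2
      have h1 : σ e < σ e1 := lt_of_le_of_ne (hmax e heT)
        fun h => (mem_erase.1 he).1 (hσ h)
      ext x
      simp only [mem_filter, hT'def, mem_erase]
      constructor
      · rintro ⟨hxT, hlt⟩
        exact ⟨⟨fun h => by subst h; omega, hxT⟩, hlt⟩
      · rintro ⟨⟨hxe, hxT⟩, hlt⟩
        exact ⟨hxT, hlt⟩
    have hPP' : ∀ e ∈ T',
        ((rank ℬ (insert e (S ∪ T.filter fun g => σ g < σ e)) =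
            rank ℬ (S ∪ T.filter fun g => σ g < σ e) + 1) ↔
          (rank ℬ (insert e (S ∪ T'.filter fun g => σ g < σ e)) =
            rank ℬ (S ∪ T'.filter fun g => σ g < σ e) + 1)) := by
      intro e he
      rw [hfilters e he]
    have hsplit : (T.filter fun e => rank ℬ (insert e (S ∪ T.filter fun g => σ g < σ e)) =
          rank ℬ (S ∪ T.filter fun g => σ g < σ e) + 1) =
        if rank ℬ (insert e1 (S ∪ T.filter fun g => σ g < σ e1)) =
            rank ℬ (S ∪ T.filter fun g => σ g < σ e1) + 1 then
          insert e1 (T'.filter fun e =>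
            rank ℬ (insert e (S ∪ T'.filter fun g => σ g < σ e)) =
              rank ℬ (S ∪ T'.filter fun g => σ g < σ e) + 1)
        else (T'.filter fun e =>
            rank ℬ (insert e (S ∪ T'.filter fun g => σ g < σ e)) =
              rank ℬ (S ∪ T'.filter fun g => σ g < σ e) + 1) := by
      have h00 : (T.filter fun e => rank ℬ (insert e (S ∪ T.filter fun g => σ g < σ e)) =
            rank ℬ (S ∪ T.filter fun g => σ g < σ e) + 1) =
          ((insert e1 T').filter fun e =>
            rank ℬ (insert e (S ∪ T.filter fun g => σ g < σ e)) =
              rank ℬ (S ∪ T.filter fun g => σ g < σ e) + 1) := by rw [hins]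
      rw [h00, filter_insert, filter_congr hPP']
    have hunion : S ∪ T = insert e1 (S ∪ T') := by rw [← hins, union_insert]
    have hrankle : rank ℬ S ≤ rank ℬ (S ∪ T') := rank_mono subset_union_left
    have hrcases : rank ℬ (S ∪ T) = rank ℬ (S ∪ T') ∨
        rank ℬ (S ∪ T) = rank ℬ (S ∪ T') + 1 := by
      rw [hunion]
      exact rank_insert_cases ℬ e1 (S ∪ T')
    have hP1 : (rank ℬ (insert e1 (S ∪ T.filter fun g => σ g < σ e1)) =
        rank ℬ (S ∪ T.filter fun g => σ g < σ e1) + 1) ↔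
        rank ℬ (S ∪ T) = rank ℬ (S ∪ T') + 1 := by
      rw [hfilter1, ← hunion]
    have hIH := ih T' hT'ss
    by_cases h1 : rank ℬ (insert e1 (S ∪ T.filter fun g => σ g < σ e1)) =
        rank ℬ (S ∪ T.filter fun g => σ g < σ e1) + 1
    · rw [hsplit, if_pos h1,
        card_insert_of_notMem (fun h => he1T' (mem_filter.1 h).1), hIH]
      have := hP1.1 h1
      omega
    · rw [hsplit, if_neg h1, hIH]
      have : rank ℬ (S ∪ T) = rank ℬ (S ∪ T') := by
        rcases hrcases with h | h
        · exact h
        · exact absurd (hP1.2 h) h1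
      omega

end Aux5
section Aux6

variable {E : Finset α} {ℬ : Finset (Finset α)} {σ : α → ℕ}

lemma card_subL_inter (hM : IsMatroidOn E ℬ) (hσ : Function.Injective σ)
    {S : Finset α} (hS : S ⊆ E) :
    (subL E ℬ σ S ∩ S).card = S.card - rank ℬ S := by
  have h1 : subL E ℬ σ S ∩ S = S.filter fun e =>
      rank ℬ (insert e (S.filter fun g => σ e < σ g)) =
        rank ℬ (S.filter fun g => σ e < σ g) := by
    ext e
    rw [mem_subL_inter hM hσ hS e, mem_filter]
  rw [h1, count_nullity hσ ℬ S]

lemma card_subI_sdiff (hM : IsMatroidOn E ℬ) (hσ : Function.Injective σ)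
    {S : Finset α} (hS : S ⊆ E) :
    (subI E ℬ σ S \ S).card = rank ℬ E - rank ℬ S := by
  have h1 : subI E ℬ σ S \ S = (E \ S).filter fun e =>
      rank ℬ (insert e (S ∪ (E \ S).filter fun g => σ g < σ e)) =
        rank ℬ (S ∪ (E \ S).filter fun g => σ g < σ e) + 1 := by
    ext e
    rw [mem_subI_sdiff hM hσ hS e, mem_filter]
  rw [h1, count_corank hσ ℬ S (E \ S), union_sdiff_of_subset hS]

lemma nonbasis_nonempty (hM : IsMatroidOn E ℬ) (hσ : Function.Injective σ)
    {S : Finset α} (hS : S ⊆ E) (hSB : S ∉ ℬ) :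
    (subI E ℬ σ S \ S).Nonempty ∨ (subL E ℬ σ S ∩ S).Nonempty := by
  by_cases hind : rank ℬ S = S.card
  · left
    rw [← card_pos, card_subI_sdiff hM hσ hS]
    have h1 : rank ℬ S ≤ rank ℬ E := rank_mono hS
    have h2 : rank ℬ S ≠ rank ℬ E := by
      intro h
      exact hSB (mem_bases_of_card hM ((indep_iff_rank hM).2 hind) (by omega))
    omega
  · right
    rw [← card_pos, card_subL_inter hM hσ hS]
    have := rank_le_card ℬ S
    omega

lemma subI_sdiff_basis (hM : IsMatroidOn E ℬ) {B : Finset α} (hB : B ∈ ℬ) :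
    subI E ℬ σ B \ B = ∅ := by
  refine eq_empty_iff_forall_notMem.2 fun e he => ?_
  obtain ⟨heI, heB⟩ := mem_sdiff.1 he
  obtain ⟨heE, C, hC, hCsub, hminOf⟩ := mem_filter.1 heI
  obtain ⟨y, hy⟩ := hC.2.1 B hB
  obtain ⟨hyB, hyC⟩ := mem_inter.1 hy
  rcases mem_insert.1 (hCsub hyC) with h | h
  · exact heB (h ▸ hyB)
  · exact (mem_sdiff.1 h).2 hyB

lemma subL_inter_basis (hM : IsMatroidOn E ℬ) {B : Finset α} (hB : B ∈ ℬ) :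
    subL E ℬ σ B ∩ B = ∅ := by
  refine eq_empty_iff_forall_notMem.2 fun e he => ?_
  obtain ⟨heL, heB⟩ := mem_inter.1 he
  obtain ⟨heE, C, hC, hCsub, hminOf⟩ := mem_filter.1 heL
  have hCB : C ⊆ B := by
    intro x hx
    rcases mem_insert.1 (hCsub hx) with h | h
    · exact h ▸ heB
    · exact h
  exact hC.2.1 ⟨B, hB, hCB⟩

lemma subI_inter_basis {B : Finset α} : subI E ℬ σ B ∩ B = intSet E ℬ σ B := by
  ext e
  simp only [subI, intSet, IntActive, mem_inter, mem_filter]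
  tauto

lemma subL_sdiff_basis {B : Finset α} : subL E ℬ σ B \ B = extSet E ℬ σ B := by
  ext e
  simp only [subL, extSet, ExtActive, mem_sdiff, mem_filter]
  tauto

end Aux6
/-- Specializations of the Gordon–Traldi expansion: setting `x = 1, z = 1` recovers
Whitney's corank-nullity expansion; setting `w = 0, y = 0` recovers Tutte's basis
activities expansion; and with `w = 0, y = 0` only bases contribute nonzero terms,
i.e. every non-basis subset has an internally active absent element or an externally
active present element. -/
theorem gordon_traldi_specializations
    (E : Finset α) (ℬ : Finset (Finset α)) (hM : IsMatroidOn E ℬ)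
    (σ : α → ℕ) (hσ : Function.Injective σ) :
    (∀ w y : ℤ,
      ∑ S ∈ E.powerset, w ^ (subI E ℬ σ S \ S).card * y ^ (subL E ℬ σ S ∩ S).card =
        ∑ A ∈ E.powerset,
          w ^ (rank ℬ E - rank ℬ A) * y ^ (A.card - rank ℬ A)) ∧
    (∀ x z : ℤ,
      ∑ S ∈ E.powerset,
          x ^ (subI E ℬ σ S ∩ S).card * (0 : ℤ) ^ (subI E ℬ σ S \ S).card *
            (0 : ℤ) ^ (subL E ℬ σ S ∩ S).card * z ^ (subL E ℬ σ S \ S).card =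
        ∑ B ∈ ℬ, x ^ (intSet E ℬ σ B).card * z ^ (extSet E ℬ σ B).card) ∧
    (∀ S ∈ E.powerset, S ∉ ℬ →
      (subI E ℬ σ S \ S).Nonempty ∨ (subL E ℬ σ S ∩ S).Nonempty) := by
  refine ⟨?_, ?_, ?_⟩
  · intro w y
    refine Finset.sum_congr rfl fun S hS => ?_
    rw [card_subI_sdiff hM hσ (mem_powerset.1 hS), card_subL_inter hM hσ (mem_powerset.1 hS)]
  · intro x z
    have hBsub : ℬ ⊆ E.powerset := fun B hB => mem_powerset.2 (hM.2.1 B hB)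
    have hzero : ∀ S ∈ E.powerset, S ∉ ℬ →
        x ^ (subI E ℬ σ S ∩ S).card * (0 : ℤ) ^ (subI E ℬ σ S \ S).card *
          (0 : ℤ) ^ (subL E ℬ σ S ∩ S).card * z ^ (subL E ℬ σ S \ S).card = 0 := by
      intro S hS hSB
      rcases nonbasis_nonempty hM hσ (mem_powerset.1 hS) hSB with h | h
      · rw [← card_pos] at h
        rw [zero_pow (by omega : (subI E ℬ σ S \ S).card ≠ 0)]
        ring
      · rw [← card_pos] at h
        rw [zero_pow (by omega : (subL E ℬ σ S ∩ S).card ≠ 0)]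
        ring
    rw [← Finset.sum_subset hBsub hzero]
    refine Finset.sum_congr rfl fun B hB => ?_
    rw [subI_sdiff_basis hM hB, subL_inter_basis hM hB, subI_inter_basis, subL_sdiff_basis]
    simp
  · intro S hS hSB
    exact nonbasis_nonempty hM hσ (mem_powerset.1 hS) hSB

end TutteActivities
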